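/- Let K be a field of characteristic 0, let λ ∈ K, λ ≠ 0, and let X, Y be algebraically independent over K. Set F = K(X, Y). Then the element a = −(1/16)(λ² − 2λ(X + Y) + (Y − X)²) is not a square in F. -/

import Mathlib

open MvPolynomial

theorem area_element_not_square_in_rational_function_field
    {K : Type*} [Field K] [CharZero K] (lam : K) (hl : lam ≠ 0) :
    ∀ r : FractionRing (MvPolynomial (Fin 2) K),
      r ^ 2 ≠ -(1 / 16 : FractionRing (MvPolynomial (Fin 2) K)) *
        algebraMap (MvPolynomial (Fin 2) K) (FractionRing (MvPolynomial (Fin 2) K))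
          (C (lam ^ 2) - C (2 * lam) * (X 0 + X 1) + (X 1 - X 0) ^ 2) := by
  intro r hr
  set R := MvPolynomial (Fin 2) K with hR
  set p : R := C (lam ^ 2) - C (2 * lam) * (X 0 + X 1) + (X 1 - X 0) ^ 2 with hp
  have hs : (4 * r) ^ 2 = algebraMap R (FractionRing R) (-p) := by
    rw [map_neg, show (4 * r) ^ 2 = 16 * r ^ 2 by ring, hr]
    ring
  have hint : IsIntegral R (4 * r) := by
    refine ⟨Polynomial.X ^ 2 + Polynomial.C p, ?_, ?_⟩
    · exact Polynomial.monic_X_pow_add_C p two_ne_zero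
    · simp [Polynomial.eval₂, hs]
      exact neg_add_cancel _
  set_option synthInstance.maxHeartbeats 1000000 in
  have hiff := IsIntegrallyClosed.isIntegral_iff (R := R) (K := FractionRing R) (x := 4 * r)
  obtain ⟨q, hq⟩ := hiff.mp hint
  have hq2 : q ^ 2 = -p := by
    apply IsFractionRing.injective R (FractionRing R)
    rw [map_pow, hq, hs]
  have h3 := congrArg (aeval (fun _ : Fin 2 => (Polynomial.X : Polynomial K))) hq2
  set t : Polynomial K := aeval (fun _ : Fin 2 => (Polynomial.X : Polynomial K)) q with ht
  have key : t ^ 2 = Polynomial.C (4 * lam) * Polynomial.X + Polynomial.C (-(lam ^ 2)) := by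
    rw [ht, ← map_pow, h3, hp]
    simp only [map_neg, map_add, map_sub, map_mul, map_pow, aeval_C, aeval_X,
      Polynomial.C_mul, Polynomial.C_neg, Polynomial.C_pow, map_ofNat, Polynomial.algebraMap_eq]
    ring
  have hdeg : (t ^ 2).natDegree = 1 := by
    rw [key]
    exact Polynomial.natDegree_linear (mul_ne_zero (by norm_num) hl)
  rw [Polynomial.natDegree_pow] at hdeg
  omega
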